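/- arXiv:2003.14218 — 5 statements merged into one kernel-verified Lean document; each statement's English description precedes it below -/
import Mathlib

section
/- Let O be a finite order ideal in the terms of n variables, ∂O its border and P_O the Pommaret basis of the monomial ideal generated by the terms outside O. Let K be a field, A a commutative Noetherian K-algebra, B a ∂O-marked set in R_A = A[x_1,…,x_n], P = {b ∈ B : Ht(b) ∈ P_O} the P_O-marked set contained in B, and B' = B ∖ P. Then B is a ∂O-marked basis if and only if P is a P_O-marked basis and every polynomial of B' belongs to the ideal (P) generated by P. -/
open MvPolynomial

/-- A term in `n` variables, viewed as its exponent vector in `ℕ^n`. -/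
abbrev Term (n : ℕ) := Fin n →₀ ℕ

/-- The total degree of a term. -/
def termDeg {n : ℕ} (τ : Term n) : ℕ := τ.sum fun _ e => e

/-- `O` is an order ideal: every divisor (componentwise `≤`) of a term of `O` lies in `O`. -/
def IsOrderIdeal {n : ℕ} (O : Set (Term n)) : Prop :=
  ∀ σ τ : Term n, τ ∈ O → σ ≤ τ → σ ∈ O

/-- The border `∂O` of an order ideal `O`. -/
def border {n : ℕ} (O : Set (Term n)) : Set (Term n) :=
  {μ | μ ∉ O ∧ ∃ τ ∈ O, ∃ i : Fin n, μ = τ + Finsupp.single i 1}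

/-- The Pommaret basis `P_O = {σ ∉ O : σ / min σ ∈ O}` of the monomial ideal generated by the
terms outside `O`; here `i` is the minimal variable of `σ`. -/
def pommaret {n : ℕ} (O : Set (Term n)) : Set (Term n) :=
  {σ | σ ∉ O ∧ ∃ i : Fin n, σ i ≠ 0 ∧ (∀ j : Fin n, j < i → σ j = 0) ∧
    σ - Finsupp.single i 1 ∈ O}

/-- `F` is an `H`-marked set (with tails in `O`): for every `α ∈ H`,
`F α = α - Σ_{σ ∈ O} c_σ σ`, i.e. the coefficient of `α` is `1` and all other
terms in the support of `F α` lie in `O`. -/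
def IsMarkedSet {n : ℕ} (A : Type*) [CommRing A] (O H : Set (Term n))
    (F : Term n → MvPolynomial (Fin n) A) : Prop :=
  ∀ α ∈ H, (F α).coeff α = 1 ∧ ∀ γ ∈ (F α).support, γ ≠ α → γ ∈ O

/-- The `A`-submodule `⟨O⟩_A` of `R_A` spanned by the monomials with exponent in `O`. -/
noncomputable def OSpan {n : ℕ} (A : Type*) [CommRing A] (O : Set (Term n)) :
    Submodule A (MvPolynomial (Fin n) A) :=
  Submodule.span A ((fun σ : Term n => (monomial σ (1 : A) : MvPolynomial (Fin n) A)) '' O)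

/-- `R_A = (S) ⊕ ⟨O⟩_A` as an internal direct sum of `A`-modules. -/
def IsBasisDecomp {n : ℕ} (A : Type*) [CommRing A] (O : Set (Term n))
    (S : Set (MvPolynomial (Fin n) A)) : Prop :=
  (Submodule.restrictScalars A (Ideal.span S) ⊓ OSpan A O = ⊥) ∧
  (Submodule.restrictScalars A (Ideal.span S) ⊔ OSpan A O = ⊤)

/-- `F` is an `H`-marked basis. -/
def IsMarkedBasis {n : ℕ} (A : Type*) [CommRing A] (O H : Set (Term n))
    (F : Term n → MvPolynomial (Fin n) A) : Prop :=
  IsMarkedSet A O H F ∧ IsBasisDecomp A O (F '' H)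

/-- The iterated borders: `∂^0 O = O` and `∂^{k+1} O = ∂(∂^0 O ∪ ⋯ ∪ ∂^k O)`. -/
def borderIter {n : ℕ} (O : Set (Term n)) : ℕ → Set (Term n)
  | 0 => O
  | k + 1 => border (⋃ j : Fin (k + 1), borderIter O j.1)
decreasing_by exact j.2

/-- The index `ind_O(μ)`: the least `k` with `μ ∈ ∂^k O`. -/
noncomputable def indO {n : ℕ} (O : Set (Term n)) (μ : Term n) : ℕ :=
  sInf {k | μ ∈ borderIter O k}

/-- The multiplicative set of `β i` for the degree-ordered border reduction structure:
`M_{β_i} = {η : β_j ∤ η β_i for every j > i}`. -/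
def multSet {n m : ℕ} (β : Fin m → Term n) (i : Fin m) : Set (Term n) :=
  {η | ∀ j : Fin m, i < j → ¬ β j ≤ η + β i}

/-- The cone of `β i` by its multiplicative set. -/
def cone {n m : ℕ} (β : Fin m → Term n) (i : Fin m) : Set (Term n) :=
  {γ | ∃ η ∈ multSet β i, γ = η + β i}

/-- One step of border reduction: some `γ = η β_i ∈ supp g` with `η ∈ M_{β_i}` is replaced
using the marked polynomial `B i`. -/
def BStep {n m : ℕ} {A : Type*} [CommRing A] (β : Fin m → Term n)
    (B : Fin m → MvPolynomial (Fin n) A) (g h : MvPolynomial (Fin n) A) : Prop :=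
  ∃ (i : Fin m) (η : Term n), η ∈ multSet β i ∧ η + β i ∈ g.support ∧
    h = g - monomial η (g.coeff (η + β i)) * B i

/-- The S-polynomial of two marked polynomials with head terms `α`, `α'`. -/
noncomputable def Spoly {n : ℕ} {A : Type*} [CommRing A] (α α' : Term n)
    (f f' : MvPolynomial (Fin n) A) : MvPolynomial (Fin n) A :=
  monomial (α ⊔ α' - α) 1 * f - monomial (α ⊔ α' - α') 1 * f'

/-- `(α, α')` is a neighbour couple of distinct terms. -/
def Neighbour {n : ℕ} (α α' : Term n) : Prop :=
  α ≠ α' ∧ ((∃ j : Fin n, α = α' + Finsupp.single j 1) ∨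
    (∃ i j : Fin n, α + Finsupp.single i 1 = α' + Finsupp.single j 1))

/-- `(β i, β j)` is a non-multiplicative couple for the border reduction structure. -/
def NonMultB {n m : ℕ} (β : Fin m → Term n) (i j : Fin m) : Prop :=
  ∃ (ℓ : Fin n) (δ : Term n), Finsupp.single ℓ 1 ∉ multSet β i ∧ δ ∈ multSet β j ∧
    Finsupp.single ℓ 1 + β i = δ + β j

/-- The Pommaret multiplicative set of a term `α`: terms in the variables `x_1, …, min α`. -/
def pommMult {n : ℕ} (α : Term n) : Set (Term n) :=
  {η | ∀ j : Fin n, η j ≠ 0 → ∀ k : Fin n, k < j → α k = 0}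

/-- One step of Pommaret reduction. -/
def PStep {n : ℕ} {A : Type*} [CommRing A] (O : Set (Term n))
    (P : Term n → MvPolynomial (Fin n) A) (g h : MvPolynomial (Fin n) A) : Prop :=
  ∃ α ∈ pommaret O, ∃ η ∈ pommMult α, η + α ∈ g.support ∧
    h = g - monomial η (g.coeff (η + α)) * P α

/-- `(α, α')` is a non-multiplicative couple for the Pommaret reduction structure. -/
def NonMultP {n : ℕ} (α α' : Term n) : Prop :=
  ∃ ℓ : Fin n, Finsupp.single ℓ 1 ∉ pommMult α ∧
    ∃ δ ∈ pommMult α', Finsupp.single ℓ 1 + α = δ + α'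


section Aux

variable {n : ℕ}

/-- The Pommaret basis is contained in the border. -/
lemma pomm_subset_border {O : Set (Term n)} : pommaret O ⊆ border O := by
  rintro σ ⟨hσ, i, hi, -, hsub⟩
  refine ⟨hσ, σ - Finsupp.single i 1, hsub, i, ?_⟩
  ext j
  simp only [Finsupp.add_apply, Finsupp.tsub_apply, Finsupp.single_apply]
  by_cases h : i = j
  · subst h; simp; omega
  · simp [h]

/-- `termDeg` is additive. -/
lemma termDeg_add (a b : Term n) : termDeg (a + b) = termDeg a + termDeg b := by
  unfold termDeg
  exact Finsupp.sum_add_index' (fun _ => rfl) (fun _ _ _ => rfl)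

lemma termDeg_single (i : Fin n) : termDeg (Finsupp.single i 1) = 1 := by
  unfold termDeg
  rw [Finsupp.sum_single_index rfl]

/-- Existence of the Pommaret decomposition: every term outside `O` is a multiplicative
multiple of an element of the Pommaret basis. -/
lemma pomm_decomp {O : Set (Term n)} (h0 : (0 : Term n) ∈ O) :
    ∀ μ : Term n, μ ∉ O → ∃ η α : Term n, α ∈ pommaret O ∧ η ∈ pommMult α ∧ μ = η + α := by
  have key : ∀ d : ℕ, ∀ μ : Term n, termDeg μ ≤ d → μ ∉ O →
      ∃ η α : Term n, α ∈ pommaret O ∧ η ∈ pommMult α ∧ μ = η + α := by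
    intro d
    induction d with
    | zero =>
      intro μ hd hμ
      exfalso
      apply hμ
      have : μ = 0 := by
        ext i
        simp only [Finsupp.coe_zero, Pi.zero_apply]
        by_contra hi
        have hmem : i ∈ μ.support := Finsupp.mem_support_iff.2 hi
        have : μ i ≤ termDeg μ := by
          unfold termDeg
          exact Finset.single_le_sum (f := fun j => μ j) (fun _ _ => Nat.zero_le _) hmem
        omega
      rw [this]; exact h0
    | succ d ih =>
      intro μ hd hμ
      have hμ0 : μ ≠ 0 := by rintro rfl; exact hμ h0
      have hsupp : μ.support.Nonempty := Finsupp.support_nonempty_iff.2 hμ0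
      set i := μ.support.min' hsupp with hi
      have himem : i ∈ μ.support := Finset.min'_mem _ _
      have hine : μ i ≠ 0 := Finsupp.mem_support_iff.1 himem
      have hmin : ∀ j : Fin n, j < i → μ j = 0 := by
        intro j hj
        by_contra hjne
        exact absurd (Finset.min'_le _ j (Finsupp.mem_support_iff.2 hjne)) (not_le.2 hj)
      set μ' := μ - Finsupp.single i 1 with hμ'
      have hsum : μ = μ' + Finsupp.single i 1 := by
        ext j
        simp only [hμ', Finsupp.add_apply, Finsupp.tsub_apply, Finsupp.single_apply]
        by_cases h : i = j
        · subst h; simp; omega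
        · simp [h]
      have hdeg' : termDeg μ' ≤ d := by
        have := termDeg_add μ' (Finsupp.single i 1)
        rw [← hsum, termDeg_single] at this
        omega
      by_cases hμ'O : μ' ∈ O
      · refine ⟨0, μ, ⟨hμ, i, hine, hmin, hμ'O⟩, ?_, (zero_add μ).symm⟩
        intro j hj
        simp at hj
      · obtain ⟨η', α', hα', hm', he'⟩ := ih μ' hdeg' hμ'O
        refine ⟨η' + Finsupp.single i 1, α', hα', ?_, ?_⟩
        · intro j hj k hk
          rcases Nat.eq_zero_or_pos (η' j) with h1 | h1
          · have hj' : (Finsupp.single i 1 : Term n) j ≠ 0 := by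
              simp only [Finsupp.add_apply] at hj; omega
            have hji : j = i := by
              by_contra hne
              simp only [Finsupp.single_apply] at hj'
              exact hne (by by_contra h2; simp [h2] at hj'; exact h2 hj'.symm)
            subst hji
            have hk1 : α' k ≤ μ' k := by
              have := congrArg (fun f => f k) he'
              simp only [Finsupp.add_apply] at this
              omega
            have hk2 : μ' k = 0 := by
              have := congrArg (fun f => f k) hsum
              simp only [Finsupp.add_apply] at this
              have hμk : μ k = 0 := hmin k hk
              omega
            omega
          · exact hm' j (by omega) k hk
        · rw [hsum, he']
          exact add_right_comm _ _ _
  intro μ hμ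
  exact key (termDeg μ) μ le_rfl hμ

/-- The key decrease lemma: if `η + σ = η̃ + α̃` with `σ ∈ O`, `α̃ ∉ O`, `η̃` multiplicative
for `α̃`, then `η̃` is smaller than `η` in the lexicographic order with the largest variable
most significant. -/
lemma pomm_decrease {O : Set (Term n)} (hO : IsOrderIdeal O) {η σ ηt αt : Term n}
    (hσ : σ ∈ O) (hα : αt ∉ O) (hm : ηt ∈ pommMult αt) (he : η + σ = ηt + αt) :
    Finsupp.Lex (· > ·) (· < ·) ηt η := by
  by_contra hcon
  rw [Finsupp.lex_def] at hcon
  push_neg at hcon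
  have key : ∀ u : Fin n, η u ≤ ηt u := by
    have hwf : WellFounded ((· > ·) : Fin n → Fin n → Prop) := Finite.to_wellFoundedGT.wf
    intro u
    induction u using hwf.induction with
    | _ u IH =>
      by_contra hlt
      push_neg at hlt
      have hgood : ¬ (∀ d, d > u → ηt d = η d) := fun hall =>
        absurd (hcon u hall) (not_le.2 hlt)
      push_neg at hgood
      obtain ⟨d, hdu, hne⟩ := hgood
      have hd : η d < ηt d := lt_of_le_of_ne (IH d hdu) (Ne.symm hne)
      have hαu : αt u = 0 := hm d (by omega) u hdu
      have := congrArg (fun f => f u) he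
      simp only [Finsupp.add_apply] at this
      omega
  have hle : αt ≤ σ := by
    rw [Finsupp.le_iff]
    intro u _
    have := congrArg (fun f => f u) he
    simp only [Finsupp.add_apply] at this
    have := key u
    omega
  exact hα (hO αt σ hσ hle)

variable {A : Type*} [CommRing A]

/-- Pommaret reduction always terminates: the span of a Pommaret-marked set together with
`⟨O⟩` is everything. -/
lemma pomm_sup_top {O : Set (Term n)} (hO : IsOrderIdeal O) (h0 : (0 : Term n) ∈ O)
    (F : Term n → MvPolynomial (Fin n) A) (hF : IsMarkedSet A O (pommaret O) F) :
    Submodule.restrictScalars A (Ideal.span (F '' pommaret O)) ⊔ OSpan A O = ⊤ := by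
  classical
  set W := Submodule.restrictScalars A (Ideal.span (F '' pommaret O)) ⊔ OSpan A O with hW
  have lwf : WellFounded (Finsupp.Lex ((· > ·) : Fin n → Fin n → Prop)
      ((· < ·) : ℕ → ℕ → Prop)) :=
    Finsupp.Lex.wellFounded' (fun m => Nat.not_lt_zero m) (wellFounded_lt)
      (wellFounded_lt)
  have main : ∀ η σ : Term n, σ ∈ O → (monomial (η + σ) (1 : A)) ∈ W := by
    intro η
    induction η using lwf.induction with
    | _ η IH =>
      intro σ hσ
      by_cases hin : η + σ ∈ O
      · exact Submodule.mem_sup_right (Submodule.subset_span ⟨_, hin, rfl⟩)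
      · obtain ⟨ηt, αt, hαt, hm, he⟩ := pomm_decomp h0 (η + σ) hin
        have hr : Finsupp.Lex (· > ·) (· < ·) ηt η :=
          pomm_decrease hO hσ hαt.1 hm he
        obtain ⟨hc1, hc2⟩ := hF αt hαt
        set q : MvPolynomial (Fin n) A := monomial αt 1 - F αt with hq
        have hqsupp : ∀ v ∈ q.support, v ∈ O := by
          intro v hv
          have hvc : coeff v q ≠ 0 := MvPolynomial.mem_support_iff.1 hv
          have hvne : v ≠ αt := by
            rintro rfl
            simp [hq, MvPolynomial.coeff_sub, MvPolynomial.coeff_monomial, hc1] at hvc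
          have hvF : coeff v (F αt) ≠ 0 := by
            simp only [hq, MvPolynomial.coeff_sub, MvPolynomial.coeff_monomial] at hvc
            intro h
            rw [h] at hvc
            simp [Ne.symm hvne] at hvc
          exact hc2 v (MvPolynomial.mem_support_iff.2 hvF) hvne
        have hdecomp : monomial (η + σ) (1 : A) = monomial ηt 1 * F αt + monomial ηt 1 * q := by
          rw [hq, he]
          have hmm : (monomial ηt (1 : A)) * monomial αt 1 = monomial (ηt + αt) 1 := by
            rw [MvPolynomial.monomial_mul, one_mul]
          rw [← hmm]; ring
        rw [hdecomp]
        apply Submodule.add_mem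
        · apply Submodule.mem_sup_left
          show monomial ηt (1 : A) * F αt ∈ Ideal.span (F '' pommaret O)
          exact Ideal.mul_mem_left _ _ (Ideal.subset_span ⟨αt, hαt, rfl⟩)
        · have hqsum := q.as_sum
          rw [hqsum, Finset.mul_sum]
          apply Submodule.sum_mem
          intro v hv
          have hc : monomial ηt (1 : A) * monomial v (coeff v q)
              = (coeff v q) • monomial (ηt + v) 1 := by
            rw [MvPolynomial.monomial_mul, one_mul, MvPolynomial.smul_monomial, smul_eq_mul,
              mul_one]
          rw [hc]
          exact Submodule.smul_mem _ _ (IH ηt hr v (hqsupp v hv))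
  rw [eq_top_iff]
  rintro p -
  have hp := p.as_sum
  rw [hp]
  apply Submodule.sum_mem
  intro v _
  have : monomial v (coeff v p) = (coeff v p) • monomial v (1 : A) := by
    rw [MvPolynomial.smul_monomial, smul_eq_mul, mul_one]
  rw [this]
  refine Submodule.smul_mem _ _ ?_
  have := main v 0 h0
  rwa [add_zero] at this

end Aux

/-- Theorem `prop:BorderAndPommB`: for a finite order ideal `O`, a
`∂O`-marked set `B` is a `∂O`-marked basis iff the `P_O`-marked set `P ⊆ B` (i.e. the
restriction of `B` to head terms in `P_O`) is a `P_O`-marked basis and every polynomial of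
`B' = B ∖ P` belongs to the ideal generated by `P`. -/
theorem border_marked_basis_iff_pommaret {n : ℕ} (K : Type*) [Field K] (A : Type*) [CommRing A] [Algebra K A]
    [IsNoetherianRing A]
    (O : Set (Term n)) (hO : IsOrderIdeal O) (hOfin : O.Finite)
    (B : Term n → MvPolynomial (Fin n) A)
    (hB : IsMarkedSet A O (border O) B) :
    IsMarkedBasis A O (border O) B ↔
      (IsMarkedBasis A O (pommaret O) B ∧
        ∀ β ∈ border O \ pommaret O, B β ∈ Ideal.span (B '' pommaret O)) := by
  by_cases h0 : (0 : Term n) ∈ O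
  · constructor
    · intro hBB
      have hPset : IsMarkedSet A O (pommaret O) B := fun α hα => hB α (pomm_subset_border hα)
      have hsup := pomm_sup_top hO h0 B hPset
      have hle : Ideal.span (B '' pommaret O) ≤ Ideal.span (B '' border O) :=
        Ideal.span_mono (Set.image_mono pomm_subset_border)
      have hB' : ∀ β ∈ border O \ pommaret O, B β ∈ Ideal.span (B '' pommaret O) := by
        intro β hβ
        have hmem : B β ∈ Submodule.restrictScalars A (Ideal.span (B '' pommaret O)) ⊔
            OSpan A O := by rw [hsup]; trivial
        obtain ⟨y, hy, z, hz, hyz⟩ := Submodule.mem_sup.1 hmem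
        have hzI : z ∈ Submodule.restrictScalars A (Ideal.span (B '' border O)) := by
          have h1 : B β ∈ Ideal.span (B '' border O) := Ideal.subset_span ⟨β, hβ.1, rfl⟩
          have h2 : y ∈ Ideal.span (B '' border O) := hle hy
          have hzeq : z = B β - y := by rw [← hyz]; ring
          rw [hzeq]
          exact Ideal.sub_mem _ h1 h2
        have hz0 : z ∈ (⊥ : Submodule A (MvPolynomial (Fin n) A)) := by
          rw [← hBB.2.1]
          exact Submodule.mem_inf.2 ⟨hzI, hz⟩
        have : z = 0 := Submodule.mem_bot _ |>.1 hz0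
        rw [this, add_zero] at hyz
        rw [← hyz]
        exact hy
      refine ⟨⟨hPset, ?_, hsup⟩, hB'⟩
      rw [← le_bot_iff, ← hBB.2.1]
      exact inf_le_inf_right _ (fun x hx => hle hx)
    · rintro ⟨hPB, hB'⟩
      have hspan : Ideal.span (B '' border O) = Ideal.span (B '' pommaret O) := by
        apply le_antisymm
        · rw [Ideal.span_le]
          rintro x ⟨β, hβ, rfl⟩
          by_cases hβp : β ∈ pommaret O
          · exact Ideal.subset_span ⟨β, hβp, rfl⟩
          · exact hB' β ⟨hβ, hβp⟩
        · exact Ideal.span_mono (Set.image_mono pomm_subset_border)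
      refine ⟨hB, ?_, ?_⟩
      · rw [hspan]; exact hPB.2.1
      · rw [hspan]; exact hPB.2.2
  · have hOempty : O = ∅ := by
      ext τ
      simp only [Set.mem_empty_iff_false, iff_false]
      intro hτ
      exact h0 (hO 0 τ hτ (Finsupp.le_iff _ _ |>.2 fun i _ => Nat.zero_le _))
    have hb : border O = ∅ := by
      ext μ
      simp [border, hOempty]
    have hp : pommaret O = ∅ := by
      ext σ
      simp [pommaret, hOempty]
    rw [hb, hp]
    constructor
    · intro h
      exact ⟨h, by simp⟩
    · rintro ⟨h, -⟩
      exact h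
end

section
/- Let O be a finite order ideal in the terms of n variables, ∂O its border and P_O the Pommaret basis of the monomial ideal generated by the terms outside O. Let K be a field and A a commutative Noetherian K-algebra. For every ideal I of R_A = A[x_1,…,x_n], I is generated by a ∂O-marked basis if and only if I is generated by a P_O-marked basis. -/
open MvPolynomial

namespace MarkedAux

open MvPolynomial Finsupp

variable {n : ℕ}

/-- Top-variable-first lexicographic order on terms. -/
def TL : (Term n) → (Term n) → Prop := Finsupp.Lex (fun j i => i < j) (· < ·)

instance : IsStrictTotalOrder (Fin n) (fun j i : Fin n => i < j) where
  trichotomous a b := by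
    intro h1 h2
    exact le_antisymm (not_lt.mp h1) (not_lt.mp h2)
  irrefl a := lt_irrefl a
  trans a b c hab hbc := lt_trans hbc hab

theorem TL_wf : WellFounded (TL (n := n)) :=
  Finsupp.Lex.wellFounded_of_finite _ (Nat.lt_wfRel.wf)

theorem TL_add_right {a b : Term n} (c : Term n) (h : TL a b) : TL (a + c) (b + c) := by
  obtain ⟨j, hj, hlt⟩ := h
  exact ⟨j, fun d hd => by simp [Finsupp.add_apply, hj d hd],
    by simpa [Finsupp.add_apply] using Nat.add_lt_add_right hlt (c j)⟩

theorem TL_zero {b : Term n} (hb : b ≠ 0) : TL 0 b := by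
  have hne : b.support.Nonempty := Finsupp.support_nonempty_iff.mpr hb
  refine ⟨b.support.max' hne, fun d hd => ?_, ?_⟩
  · have : d ∉ b.support := fun hmem => absurd (b.support.le_max' d hmem) (not_le.mpr hd)
    simp [Finsupp.notMem_support_iff.mp this]
  · have := Finsupp.mem_support_iff.mp (b.support.max'_mem hne)
    simpa using Nat.pos_of_ne_zero this

theorem TL_add_single {a b : Term n} {m : Fin n} (h : TL a b)
    (hm : ∀ k, b k ≠ 0 → m < k) : TL (a + Finsupp.single m 1) b := by
  obtain ⟨j, hj, hlt⟩ := h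
  have hbj : b j ≠ 0 := by omega
  have hmj : m < j := hm j hbj
  refine ⟨j, fun d hd => ?_, ?_⟩
  · have hmd : m ≠ d := (hmj.trans hd).ne
    simp [Finsupp.add_apply, Finsupp.single_apply, hmd, hj d hd]
  · have hmj' : m ≠ j := hmj.ne
    simpa [Finsupp.add_apply, Finsupp.single_apply, hmj'] using hlt

theorem termDeg_add (a b : Term n) : termDeg (a + b) = termDeg a + termDeg b :=
  Finsupp.sum_add_index' (fun _ => rfl) (fun _ _ _ => rfl)

theorem termDeg_single (m : Fin n) : termDeg (Finsupp.single m 1 : Term n) = 1 :=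
  Finsupp.sum_single_index rfl

theorem termDeg_pos {γ : Term n} (h : γ ≠ 0) : 0 < termDeg γ := by
  have hne : γ.support.Nonempty := Finsupp.support_nonempty_iff.mpr h
  obtain ⟨m, hm⟩ := hne
  have h1 : γ m ≤ termDeg γ :=
    Finset.single_le_sum (f := fun a => γ a) (fun _ _ => Nat.zero_le _) hm
  exact Nat.lt_of_lt_of_le (Nat.pos_of_ne_zero (Finsupp.mem_support_iff.mp hm)) h1

/-- Canonical Pommaret decomposition together with the measure decrease property. -/
theorem main_decomp (O : Set (Term n)) (hO : IsOrderIdeal O) (h0 : (0 : Term n) ∈ O) :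
    ∀ d (γ : Term n), termDeg γ ≤ d → γ ∉ O →
      ∃ η₁ : Term n, (∃ α ∈ pommaret O, γ = η₁ + α) ∧
        ∀ η σ : Term n, σ ∈ O → γ = η + σ → η ≠ 0 → TL η₁ η := by
  intro d
  induction d with
  | zero =>
    intro γ hdeg hγ
    have hγ0 : γ ≠ 0 := fun h => hγ (h ▸ h0)
    exact absurd hdeg (not_le.mpr (termDeg_pos hγ0))
  | succ d ih =>
    intro γ hdeg hγ
    have hγ0 : γ ≠ 0 := fun h => hγ (h ▸ h0)
    have hne : γ.support.Nonempty := Finsupp.support_nonempty_iff.mpr hγ0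
    set m := γ.support.min' hne with hmdef
    have hγm : γ m ≠ 0 := Finsupp.mem_support_iff.mp (γ.support.min'_mem hne)
    have hmin : ∀ j : Fin n, j < m → γ j = 0 := by
      intro j hj
      by_contra hcon
      exact absurd (γ.support.min'_le j (Finsupp.mem_support_iff.mpr hcon)) (not_le.mpr hj)
    have hle : Finsupp.single m 1 ≤ γ :=
      Finsupp.single_le_iff.mpr (Nat.one_le_iff_ne_zero.mpr hγm)
    by_cases hc : γ - Finsupp.single m 1 ∈ O
    · exact ⟨0, ⟨γ, ⟨hγ, m, hγm, hmin, hc⟩, (zero_add γ).symm⟩,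
        fun η σ hσ hrep hη => TL_zero hη⟩
    · have hγ'add : (γ - Finsupp.single m 1) + Finsupp.single m 1 = γ :=
        tsub_add_cancel_of_le hle
      have hdeg' : termDeg (γ - Finsupp.single m 1) ≤ d := by
        have h2 : termDeg γ = termDeg (γ - Finsupp.single m 1) + 1 := by
          conv_lhs => rw [← hγ'add]
          rw [termDeg_add, termDeg_single]
        omega
      obtain ⟨η₁', ⟨α, hα, hdecomp⟩, hmeas⟩ := ih (γ - Finsupp.single m 1) hdeg' hc
      refine ⟨η₁' + Finsupp.single m 1, ⟨α, hα, ?_⟩, ?_⟩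
      · conv_lhs => rw [← hγ'add, hdecomp]
        rw [add_assoc, add_comm α, ← add_assoc]
      · intro η σ hσ hrep hη
        by_cases hm0 : η m = 0
        · -- strip the variable from σ
          have hγmη : γ m = η m + σ m := by rw [hrep]; simp [Finsupp.add_apply]
          have hσm : σ m ≠ 0 := by omega
          have hleσ : Finsupp.single m 1 ≤ σ :=
            Finsupp.single_le_iff.mpr (Nat.one_le_iff_ne_zero.mpr hσm)
          have hσ' : σ - Finsupp.single m 1 ∈ O := hO _ σ hσ tsub_le_self
          have hconv : η + (σ - Finsupp.single m 1) + Finsupp.single m 1 = γ := by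
            rw [add_assoc, tsub_add_cancel_of_le hleσ]; exact hrep.symm
          have hrep' : γ - Finsupp.single m 1 = η + (σ - Finsupp.single m 1) := by
            rw [← hconv, add_tsub_cancel_right]
          have h1 : TL η₁' η := hmeas η _ hσ' hrep' hη
          refine TL_add_single h1 ?_
          intro k hk
          have hγk : γ k ≠ 0 := by
            have : γ k = η k + σ k := by rw [hrep]; simp [Finsupp.add_apply]
            omega
          have hmk : m ≤ k := γ.support.min'_le k (Finsupp.mem_support_iff.mpr hγk)
          rcases hmk.lt_or_eq with h | h
          · exact h
          · exact absurd (h ▸ hm0) hk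
        · -- strip the variable from η
          have hleη : Finsupp.single m 1 ≤ η :=
            Finsupp.single_le_iff.mpr (Nat.one_le_iff_ne_zero.mpr hm0)
          have hηadd : (η - Finsupp.single m 1) + Finsupp.single m 1 = η :=
            tsub_add_cancel_of_le hleη
          have hconv : ((η - Finsupp.single m 1) + σ) + Finsupp.single m 1 = γ := by
            rw [add_right_comm, hηadd]; exact hrep.symm
          have hrep' : γ - Finsupp.single m 1 = (η - Finsupp.single m 1) + σ := by
            rw [← hconv, add_tsub_cancel_right]
          have hη'0 : η - Finsupp.single m 1 ≠ 0 := by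
            intro h
            exact hc (by rw [hrep', h, zero_add]; exact hσ)
          have h1 := TL_add_right (Finsupp.single m 1) (hmeas _ σ hσ hrep' hη'0)
          rwa [hηadd] at h1

theorem pommaret_subset_border (O : Set (Term n)) : pommaret O ⊆ border O := by
  rintro σ ⟨hσ, i, hi, -, hsub⟩
  refine ⟨hσ, σ - Finsupp.single i 1, hsub, i, ?_⟩
  exact (tsub_add_cancel_of_le (Finsupp.single_le_iff.mpr (Nat.one_le_iff_ne_zero.mpr hi))).symm

variable {A : Type*} [CommRing A]

theorem monomial_mem_OSpan {O : Set (Term n)} {σ : Term n} (hσ : σ ∈ O) (c : A) :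
    (monomial σ c : MvPolynomial (Fin n) A) ∈ OSpan A O := by
  have h1 : (monomial σ (1 : A) : MvPolynomial (Fin n) A) ∈ OSpan A O :=
    Submodule.subset_span ⟨σ, hσ, rfl⟩
  have : (monomial σ c : MvPolynomial (Fin n) A) = c • monomial σ 1 := by
    rw [smul_monomial, smul_eq_mul, mul_one]
  rw [this]
  exact Submodule.smul_mem _ _ h1

theorem support_subset_of_mem_OSpan {O : Set (Term n)} {p : MvPolynomial (Fin n) A}
    (hp : p ∈ OSpan A O) : (p.support : Set (Term n)) ⊆ O := by
  classical
  refine Submodule.span_induction ?_ ?_ ?_ ?_ hp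
  · rintro x ⟨σ, hσ, rfl⟩
    intro γ hγ
    have := MvPolynomial.support_monomial_subset (s := σ) (a := (1:A)) (by simpa using hγ)
    simp only [Finset.mem_singleton] at this
    exact this ▸ hσ
  · simp
  · intro x y _ _ hx hy γ hγ
    rcases Finset.mem_union.mp (MvPolynomial.support_add (by simpa using hγ)) with h | h
    · exact hx (by simpa using h)
    · exact hy (by simpa using h)
  · intro a x _ hx γ hγ
    exact hx (Finset.mem_coe.mpr (MvPolynomial.support_smul (Finset.mem_coe.mp hγ)))

/-- The key module-theoretic fact: if `F` has heads in `P_O` marked over `O` and all its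
values lie in an ideal `J`, then `J + ⟨O⟩ = R`. -/
theorem pomm_sup_top {O : Set (Term n)} (hO : IsOrderIdeal O) (h0 : (0 : Term n) ∈ O)
    (F : Term n → MvPolynomial (Fin n) A) (J : Ideal (MvPolynomial (Fin n) A))
    (hFJ : ∀ α ∈ pommaret O, F α ∈ J)
    (hFt : ∀ α ∈ pommaret O, (monomial α 1 : MvPolynomial (Fin n) A) - F α ∈ OSpan A O) :
    Submodule.restrictScalars A J ⊔ OSpan A O = ⊤ := by
  classical
  set M := Submodule.restrictScalars A J ⊔ OSpan A O with hM
  have key : ∀ η : Term n, ∀ σ ∈ O, (monomial (η + σ) 1 : MvPolynomial (Fin n) A) ∈ M := by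
    intro η
    induction η using TL_wf.induction with
    | _ η IH =>
      intro σ hσ
      by_cases hin : η + σ ∈ O
      · exact Submodule.mem_sup_right (monomial_mem_OSpan hin 1)
      · obtain ⟨η₁, ⟨α, hα, hdec⟩, hmeas⟩ :=
          main_decomp O hO h0 (termDeg (η + σ)) (η + σ) le_rfl hin
        have hη : η ≠ 0 := fun h => hin (by rw [h, zero_add]; exact hσ)
        have hTL : TL η₁ η := hmeas η σ hσ rfl hη
        have hprod : (monomial η₁ 1 : MvPolynomial (Fin n) A) * monomial α 1
            = monomial (η + σ) 1 := by
          rw [MvPolynomial.monomial_mul, one_mul, ← hdec]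
        have heq : (monomial (η + σ) 1 : MvPolynomial (Fin n) A)
            = monomial η₁ 1 * F α + monomial η₁ 1 * (monomial α 1 - F α) := by
          rw [mul_sub, ← hprod]; ring
        rw [heq]
        refine Submodule.add_mem _ ?_ ?_
        · exact Submodule.mem_sup_left (J.mul_mem_left _ (hFJ α hα))
        · -- multiply an element of OSpan by the monomial η₁ and use the IH
          have hq := hFt α hα
          refine Submodule.span_induction ?_ ?_ ?_ ?_ hq
          · rintro x ⟨σ', hσ', rfl⟩
            have : (monomial η₁ 1 : MvPolynomial (Fin n) A) * monomial σ' 1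
                = monomial (η₁ + σ') 1 := by rw [MvPolynomial.monomial_mul, one_mul]
            rw [this]
            exact IH η₁ hTL σ' hσ'
          · simp only [mul_zero]
            exact Submodule.zero_mem M
          · intro x y _ _ hx hy
            rw [mul_add]
            exact Submodule.add_mem _ hx hy
          · intro a x _ hx
            rw [mul_smul_comm]
            exact Submodule.smul_mem _ _ hx
  have mono : ∀ (γ : Term n) (c : A), (monomial γ c : MvPolynomial (Fin n) A) ∈ M := by
    intro γ c
    have h1 : (monomial γ 1 : MvPolynomial (Fin n) A) ∈ M := by
      have := key γ 0 h0
      rwa [add_zero] at this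
    have : (monomial γ c : MvPolynomial (Fin n) A) = c • monomial γ 1 := by
      rw [smul_monomial, smul_eq_mul, mul_one]
    rw [this]
    exact Submodule.smul_mem _ _ h1
  rw [eq_top_iff]
  intro p _
  rw [p.as_sum]
  exact Submodule.sum_mem _ fun v _ => mono v _

/-- Core construction: from the direct sum decomposition, build an `H`-marked basis. -/
theorem core {O : Set (Term n)} (hO : IsOrderIdeal O) (h0 : (0 : Term n) ∈ O)
    (I : Ideal (MvPolynomial (Fin n) A))
    (hinf : Submodule.restrictScalars A I ⊓ OSpan A O = ⊥)
    (hsup : Submodule.restrictScalars A I ⊔ OSpan A O = ⊤)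
    (H : Set (Term n)) (hHO : ∀ α ∈ H, α ∉ O) (hPH : pommaret O ⊆ H) :
    ∃ F : Term n → MvPolynomial (Fin n) A,
      IsMarkedBasis A O H F ∧ I = Ideal.span (F '' H) := by
  classical
  have hdecomp : ∀ τ : Term n, ∃ y, y ∈ I ∧ ∃ z ∈ OSpan A O,
      y + z = (monomial τ 1 : MvPolynomial (Fin n) A) := by
    intro τ
    have hmem : (monomial τ 1 : MvPolynomial (Fin n) A)
        ∈ Submodule.restrictScalars A I ⊔ OSpan A O := by rw [hsup]; trivial
    obtain ⟨y, hy, z, hz, hyz⟩ := Submodule.mem_sup.mp hmem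
    exact ⟨y, hy, z, hz, hyz⟩
  choose F hFI z hzO hFz using hdecomp
  have htail : ∀ τ : Term n, (monomial τ 1 : MvPolynomial (Fin n) A) - F τ = z τ := by
    intro τ
    rw [← hFz τ]
    ring
  have htailO : ∀ τ : Term n, (monomial τ 1 : MvPolynomial (Fin n) A) - F τ ∈ OSpan A O := by
    intro τ; rw [htail τ]; exact hzO τ
  have hJI : Ideal.span (F '' H) ≤ I := Ideal.span_le.mpr (by rintro _ ⟨α, hα, rfl⟩; exact hFI α)
  have htop : Submodule.restrictScalars A (Ideal.span (F '' H)) ⊔ OSpan A O = ⊤ :=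
    pomm_sup_top hO h0 F _ (fun α hα => Ideal.subset_span ⟨α, hPH hα, rfl⟩)
      (fun α _ => htailO α)
  have hIJ : I ≤ Ideal.span (F '' H) := by
    intro p hp
    have hp' : p ∈ Submodule.restrictScalars A (Ideal.span (F '' H)) ⊔ OSpan A O := by
      rw [htop]; trivial
    obtain ⟨y, hy, q, hq, hyq⟩ := Submodule.mem_sup.mp hp'
    have hyI : y ∈ I := hJI hy
    have hqI : q ∈ Submodule.restrictScalars A I ⊓ OSpan A O := by
      refine Submodule.mem_inf.mpr ⟨?_, hq⟩
      have hqpy : q = p - y := by rw [← hyq]; ring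
      show q ∈ I
      rw [hqpy]
      exact Ideal.sub_mem I hp hyI
    rw [hinf] at hqI
    have hq0 : q = 0 := hqI
    have : p = y := by rw [← hyq, hq0, add_zero]
    rw [this]
    exact hy
  have hJ : Ideal.span (F '' H) = I := le_antisymm hJI hIJ
  refine ⟨F, ⟨?_, ?_, ?_⟩, hJ.symm⟩
  · -- marked set
    intro α hα
    have hαO : α ∉ O := hHO α hα
    have hFα : F α = monomial α 1 - z α := by
      rw [← htail α]; ring
    constructor
    · have hzα : (z α).coeff α = 0 := by
        by_contra hcon
        exact hαO (support_subset_of_mem_OSpan (hzO α)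
          (by simpa using MvPolynomial.mem_support_iff.mpr hcon))
      rw [hFα, MvPolynomial.coeff_sub, MvPolynomial.coeff_monomial, if_pos rfl, hzα, sub_zero]
    · intro γ hγ hγα
      rw [hFα] at hγ
      have := MvPolynomial.support_sub _ _ _ hγ
      rcases Finset.mem_union.mp this with h | h
      · have := MvPolynomial.support_monomial_subset h
        simp only [Finset.mem_singleton] at this
        exact absurd this hγα
      · exact support_subset_of_mem_OSpan (hzO α) (by simpa using h)
  · rw [hJ]; exact hinf
  · rw [hJ]; exact hsup

end MarkedAux

/-- for a finite order ideal `O`, an ideal `I ⊆ R_A` is generated by a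
`∂O`-marked basis iff it is generated by a `P_O`-marked basis. -/
theorem generated_by_border_basis_iff_pommaret_basis {n : ℕ} (K : Type*) [Field K] (A : Type*) [CommRing A] [Algebra K A]
    [IsNoetherianRing A]
    (O : Set (Term n)) (hO : IsOrderIdeal O) (hOfin : O.Finite)
    (I : Ideal (MvPolynomial (Fin n) A)) :
    (∃ B : Term n → MvPolynomial (Fin n) A,
        IsMarkedBasis A O (border O) B ∧ I = Ideal.span (B '' border O)) ↔
    (∃ P : Term n → MvPolynomial (Fin n) A,
        IsMarkedBasis A O (pommaret O) P ∧ I = Ideal.span (P '' pommaret O)) := by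
  rcases O.eq_empty_or_nonempty with hOe | ⟨τ0, hτ0⟩
  · subst hOe
    have hb : border (∅ : Set (Term n)) = ∅ := by
      ext μ; simp [border]
    have hp : pommaret (∅ : Set (Term n)) = ∅ := by
      ext μ; simp [pommaret]
    rw [hb, hp]
  · have h0 : (0 : Term n) ∈ O := hO 0 τ0 hτ0 (by intro i; simp)
    constructor
    · rintro ⟨B, ⟨hBset, hBinf, hBsup⟩, hI⟩
      have hinf : Submodule.restrictScalars A I ⊓ OSpan A O = ⊥ := by rw [hI]; exact hBinf
      have hsup : Submodule.restrictScalars A I ⊔ OSpan A O = ⊤ := by rw [hI]; exact hBsup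
      exact MarkedAux.core hO h0 I hinf hsup (pommaret O) (fun α hα => hα.1) subset_rfl
    · rintro ⟨P, ⟨hPset, hPinf, hPsup⟩, hI⟩
      have hinf : Submodule.restrictScalars A I ⊓ OSpan A O = ⊥ := by rw [hI]; exact hPinf
      have hsup : Submodule.restrictScalars A I ⊔ OSpan A O = ⊤ := by rw [hI]; exact hPsup
      exact MarkedAux.core hO h0 I hinf hsup (border O) (fun α hα => hα.1)
        (MarkedAux.pommaret_subset_border O)
end

section
/- Let O be a finite order ideal in the terms of n variables. If δ ∈ O and η are terms such that δ·η ∉ O and β ∈ ∂O divides δ·η and has maximal degree among the elements of ∂O dividing δ·η, then deg(η) > deg(δ·η/β). -/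
open MvPolynomial

lemma termDeg_eq_sum {n : ℕ} (τ : Term n) : termDeg τ = ∑ i : Fin n, τ i := by
  rw [termDeg, Finsupp.sum_fintype]
  intro _; rfl

lemma termDeg_lt_of_lt {n : ℕ} {σ τ : Term n} (h : σ ≤ τ) (hne : σ ≠ τ) :
    termDeg σ < termDeg τ := by
  rw [termDeg_eq_sum, termDeg_eq_sum]
  obtain ⟨i, hi⟩ : ∃ i, σ i ≠ τ i := by
    by_contra hc
    push_neg at hc
    exact hne (Finsupp.ext hc)
  exact Finset.sum_lt_sum (fun j _ => h j) ⟨i, Finset.mem_univ i, lt_of_le_of_ne (h i) hi⟩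

lemma exists_border_divisor {n : ℕ} (O : Set (Term n)) :
    ∀ (k : ℕ) (σ τ : Term n), termDeg τ - termDeg σ ≤ k → σ ≤ τ → σ ∈ O → τ ∉ O →
      ∃ μ ∈ border O, μ ≤ τ ∧ termDeg σ < termDeg μ := by
  intro k
  induction k with
  | zero =>
    intro σ τ hk hle hσ hτ
    have := termDeg_lt_of_lt hle (fun h => hτ (h ▸ hσ))
    omega
  | succ k ih =>
    intro σ τ hk hle hσ hτ
    obtain ⟨i, hi⟩ : ∃ i, σ i < τ i := by
      by_contra hc
      push_neg at hc
      exact hτ ((le_antisymm hle (Finsupp.le_def.2 hc)) ▸ hσ)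
    set σ' := σ + Finsupp.single i 1 with hσ'def
    have hle' : σ' ≤ τ := by
      intro j
      simp only [hσ'def, Finsupp.add_apply, Finsupp.single_apply]
      by_cases hij : i = j
      · subst hij; simpa using hi
      · simpa [hij] using hle j
    have hdeg' : termDeg σ' = termDeg σ + 1 := by
      rw [termDeg_eq_sum, termDeg_eq_sum, hσ'def]
      simp [Finsupp.add_apply, Finset.sum_add_distrib, Finsupp.single_apply]
    by_cases hσ'O : σ' ∈ O
    · obtain ⟨μ, hμb, hμle, hμd⟩ := ih σ' τ (by omega) hle' hσ'O hτ
      exact ⟨μ, hμb, hμle, by omega⟩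
    · exact ⟨σ', ⟨hσ'O, σ, hσ, i, rfl⟩, hle', by omega⟩

/-- Lemma `lem:IndB` (2): if `δ ∈ O`, `δη ∉ O` and `β ∈ ∂O` is a divisor
of `δη` of maximal degree among the border divisors of `δη`, then `deg η > deg(δη/β)`. -/
theorem deg_lt_of_maximal_border_divisor {n : ℕ}
    (O : Set (Term n)) (hO : IsOrderIdeal O) (hOfin : O.Finite)
    (δ η β : Term n) (hδ : δ ∈ O) (hδη : δ + η ∉ O)
    (hβ : β ∈ border O) (hdvd : β ≤ δ + η)
    (hmax : ∀ β' ∈ border O, β' ≤ δ + η → termDeg β' ≤ termDeg β) :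
    termDeg (δ + η - β) < termDeg η := by
  obtain ⟨μ, hμb, hμle, hμd⟩ := exists_border_divisor O (termDeg (δ + η) - termDeg δ)
    δ (δ + η) le_rfl le_self_add hδ hδη
  have hβδ : termDeg δ < termDeg β := lt_of_lt_of_le hμd (hmax μ hμb hμle)
  have hsum : termDeg (δ + η - β) + termDeg β = termDeg δ + termDeg η := by
    rw [termDeg_eq_sum, termDeg_eq_sum, termDeg_eq_sum, termDeg_eq_sum,
      ← Finset.sum_add_distrib, ← Finset.sum_add_distrib]
    apply Finset.sum_congr rfl
    intro j _
    have := hdvd j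
    simp only [Finsupp.add_apply] at this ⊢
    simp only [Finsupp.tsub_apply, Finsupp.add_apply]
    omega
  omega
end

section
/- Let O be a finite order ideal in the terms of n variables, and fix an enumeration β_1,…,β_m of ∂O with nondecreasing degrees; for each i put M_{β_i} = {η a term : β_j does not divide η·β_i for every j > i} and Cone(β_i) = {η·β_i : η ∈ M_{β_i}}. Then the cones Cone(β_1),…,Cone(β_m) are pairwise disjoint, and every term lying in the monomial ideal generated by ∂O belongs to exactly one cone Cone(β_i). -/
open MvPolynomial

lemma mem_cone_iff {n m : ℕ} (β : Fin m → Term n) (i : Fin m) (γ : Term n) :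
    γ ∈ cone β i ↔ β i ≤ γ ∧ ∀ j, i < j → ¬ β j ≤ γ := by
  constructor
  · rintro ⟨η, hη, rfl⟩
    exact ⟨le_add_self, fun j hj => hη j hj⟩
  · rintro ⟨hle, h⟩
    refine ⟨γ - β i, fun j hj => ?_, (tsub_add_cancel_of_le hle).symm⟩
    rw [tsub_add_cancel_of_le hle]
    exact h j hj

lemma cone_index_unique {n m : ℕ} (β : Fin m → Term n) {i j : Fin m} {γ : Term n}
    (hi : γ ∈ cone β i) (hj : γ ∈ cone β j) : i = j := by
  rw [mem_cone_iff] at hi hj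
  rcases lt_trichotomy i j with h | h | h
  · exact absurd hj.1 (hi.2 j h)
  · exact h
  · exact absurd hi.1 (hj.2 i h)

/-- for the degree-ordered border reduction structure, the cones of the
border terms are pairwise disjoint and cover the monomial ideal generated by `∂O`: every
term divisible by some border term lies in exactly one cone. -/
theorem border_cones_partition {n : ℕ}
    (O : Set (Term n)) (hO : IsOrderIdeal O) (hOfin : O.Finite)
    {m : ℕ} (β : Fin m → Term n) (hβinj : Function.Injective β)
    (hβrange : Set.range β = border O)
    (hβdeg : Monotone fun i => termDeg (β i)) :
    (∀ i j : Fin m, i ≠ j → Disjoint (cone β i) (cone β j)) ∧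
    (∀ γ : Term n, (∃ b ∈ border O, b ≤ γ) → ∃! i : Fin m, γ ∈ cone β i) := by
  constructor
  · intro i j hij
    rw [Set.disjoint_left]
    intro γ hi hj
    exact hij (cone_index_unique β hi hj)
  · rintro γ ⟨b, hb, hbγ⟩
    rw [← hβrange] at hb
    obtain ⟨i0, rfl⟩ := hb
    have hs : (Finset.univ.filter fun i : Fin m => β i ≤ γ).Nonempty :=
      ⟨i0, by simp [hbγ]⟩
    set i := (Finset.univ.filter fun i : Fin m => β i ≤ γ).max' hs with hidef
    have hile : β i ≤ γ := by
      have := (Finset.univ.filter fun i : Fin m => β i ≤ γ).max'_mem hs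
      simpa using this
    refine ⟨i, (mem_cone_iff β i γ).2 ⟨hile, fun j hj hjle => ?_⟩,
      fun j hj => cone_index_unique β hj ((mem_cone_iff β i γ).2 ⟨hile, fun j hj hjle => ?_⟩)⟩
    · exact absurd (Finset.le_max' _ j (by simp [hjle])) (not_le.2 hj)
    · exact absurd (Finset.le_max' _ j (by simp [hjle])) (not_le.2 hj)
end

section
/- Let O be a finite order ideal in the terms of n variables, and fix an enumeration β_1,…,β_m of ∂O with nondecreasing degrees; for each i put M_{β_i} = {η a term : β_j does not divide η·β_i for every j > i}. If x_ℓ·β_i = δ·β_j for some variable x_ℓ ∉ M_{β_i} and some term δ ∈ M_{β_j} (i.e., (β_i,β_j) is a non-multiplicative couple), then j > i and deg(δ) ≤ 1. -/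
open MvPolynomial

/-- Lemma `lem:nonmultBorder`: if `(β_i, β_j)` is a non-multiplicative
couple of the degree-ordered border reduction structure, witnessed by
`x_ℓ β_i = δ β_j` with `x_ℓ ∉ M_(β_i)` and `δ ∈ M_(β_j)`, then `j > i` and `deg δ ≤ 1`. -/
theorem nonmult_couple_border {n : ℕ}
    (O : Set (Term n)) (hO : IsOrderIdeal O) (hOfin : O.Finite)
    {m : ℕ} (β : Fin m → Term n) (hβinj : Function.Injective β)
    (hβrange : Set.range β = border O)
    (hβdeg : Monotone fun i => termDeg (β i))
    (i j : Fin m) (ℓ : Fin n) (δ : Term n)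
    (hℓ : Finsupp.single ℓ 1 ∉ multSet β i) (hδ : δ ∈ multSet β j)
    (heq : Finsupp.single ℓ 1 + β i = δ + β j) :
    i < j ∧ termDeg δ ≤ 1 := by
  -- extract the witness from hℓ
  simp only [multSet, Set.mem_setOf_eq, not_forall] at hℓ
  obtain ⟨k, hik, hkdvd⟩ := hℓ
  push_neg at hkdvd
  have hij : i < j := by
    rcases lt_trichotomy i j with h | h | h
    · exact h
    · -- j = i : then δ = single ℓ 1, contradicting hℓ via hδ
      subst h
      have : δ = Finsupp.single ℓ 1 := (add_right_cancel heq).symm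
      exact absurd (this ▸ hδ k hik) (by simpa using hkdvd)
    · -- j < i : then k > j and β k ≤ δ + β j, contradicting hδ
      exact absurd (heq ▸ hkdvd) (hδ k (h.trans hik))
  refine ⟨hij, ?_⟩
  have hadd : ∀ a b : Term n, termDeg (a + b) = termDeg a + termDeg b := by
    intro a b
    simpa [termDeg] using Finsupp.sum_add_index' (by simp) (fun _ e₁ e₂ => rfl)
  have hsingle : termDeg (Finsupp.single ℓ 1) = 1 := by
    simp [termDeg, Finsupp.sum_single_index]
  have hdegeq : 1 + termDeg (β i) = termDeg δ + termDeg (β j) := by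
    rw [← hsingle, ← hadd, ← hadd, heq]
  have hmono : termDeg (β i) ≤ termDeg (β j) := hβdeg hij.le
  omega
end
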